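/- Let B ∈ C^{n×n} with B_H ≥ 0, B_A anti-Hermitian, and define iterated commutators C₀ := √B_H, C_{j+1} := C_j B_A − B_A C_j. For every m ∈ ℕ₀, the range of [√B_H, B_A √B_H, …, B_A^m √B_H] equals the range of [C₀, C₁, …, C_m]. -/

import Mathlib

set_option maxHeartbeats 1000000


open Matrix
open scoped ComplexOrder

/-- The square root of a positive semidefinite matrix (removed from Mathlib; old definition). -/
noncomputable def Matrix.PosSemidef.sqrt {n : Type*} [Fintype n] [DecidableEq n]
    {A : Matrix n n ℂ} (hA : A.PosSemidef) : Matrix n n ℂ :=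
  hA.1.eigenvectorUnitary.1 * diagonal ((↑) ∘ (Real.sqrt ∘ hA.1.eigenvalues)) *
  (star hA.1.eigenvectorUnitary : Matrix n n ℂ)

/-- The iterated commutators `C₀ = √B_H`, `C_{j+1} = C_j B_A - B_A C_j`. -/
noncomputable def commSeq {n : ℕ} (S BA : Matrix (Fin n) (Fin n) ℂ) :
    ℕ → Matrix (Fin n) (Fin n) ℂ
  | 0 => S
  | j + 1 => commSeq S BA j * BA - BA * commSeq S BA j

private lemma range_sub_le {n : ℕ} (A B : Matrix (Fin n) (Fin n) ℂ) :
    LinearMap.range ((A - B).mulVecLin)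
      ≤ LinearMap.range A.mulVecLin ⊔ LinearMap.range B.mulVecLin := by
  rintro _ ⟨v, rfl⟩
  have : (A - B).mulVecLin v = A.mulVecLin v - B.mulVecLin v := by
    simp [mulVecLin_apply, Matrix.sub_mulVec]
  rw [this]
  exact Submodule.sub_mem _ (Submodule.mem_sup_left ⟨v, rfl⟩)
    (Submodule.mem_sup_right ⟨v, rfl⟩)

private lemma range_mul_le_left {n : ℕ} (A B : Matrix (Fin n) (Fin n) ℂ) :
    LinearMap.range ((A * B).mulVecLin) ≤ LinearMap.range A.mulVecLin := by
  rw [Matrix.mulVecLin_mul]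
  exact LinearMap.range_comp_le_range _ _

private lemma range_mul_eq_map {n : ℕ} (A B : Matrix (Fin n) (Fin n) ℂ) :
    LinearMap.range ((A * B).mulVecLin)
      = (LinearMap.range B.mulVecLin).map A.mulVecLin := by
  rw [Matrix.mulVecLin_mul, LinearMap.range_comp]

private lemma iSup_fin_le {n : ℕ} {f : ℕ → Submodule ℂ (Fin n → ℂ)} {a b : ℕ}
    (h : a ≤ b) : (⨆ k : Fin (a+1), f k) ≤ ⨆ k : Fin (b+1), f k :=
  iSup_le fun k => le_iSup_of_le (⟨k, by omega⟩ : Fin (b+1)) le_rfl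

private lemma aux_comm_le {n : ℕ} (S BA : Matrix (Fin n) (Fin n) ℂ) :
    ∀ j, LinearMap.range ((commSeq S BA j).mulVecLin)
      ≤ ⨆ k : Fin (j+1), LinearMap.range ((BA ^ (k : ℕ) * S).mulVecLin) := by
  intro j
  induction j with
  | zero =>
    refine le_iSup_of_le 0 ?_
    simp [commSeq]
  | succ j ih =>
    show LinearMap.range ((commSeq S BA j * BA - BA * commSeq S BA j).mulVecLin) ≤ _
    refine (range_sub_le _ _).trans (sup_le ?_ ?_)
    · exact (range_mul_le_left _ _).trans (ih.trans (iSup_fin_le (f := fun k => LinearMap.range ((BA ^ k * S).mulVecLin)) (Nat.le_succ j)))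
    · rw [range_mul_eq_map]
      refine (Submodule.map_mono ih).trans ?_
      rw [Submodule.map_iSup]
      refine iSup_le fun k => ?_
      rw [← range_mul_eq_map, ← mul_assoc, ← pow_succ']
      exact le_iSup_of_le (⟨(k : ℕ) + 1, by omega⟩ : Fin (j+2)) le_rfl

private lemma aux_pow_le {n : ℕ} (S BA : Matrix (Fin n) (Fin n) ℂ) :
    ∀ j, LinearMap.range ((BA ^ j * S).mulVecLin)
      ≤ ⨆ k : Fin (j+1), LinearMap.range ((commSeq S BA (k : ℕ)).mulVecLin) := by
  intro j
  induction j with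
  | zero =>
    refine le_iSup_of_le 0 ?_
    simp [commSeq]
  | succ j ih =>
    rw [pow_succ', mul_assoc, range_mul_eq_map]
    refine (Submodule.map_mono ih).trans ?_
    rw [Submodule.map_iSup]
    refine iSup_le fun k => ?_
    rw [← range_mul_eq_map]
    have hEq : BA * commSeq S BA (k : ℕ)
        = commSeq S BA (k : ℕ) * BA - commSeq S BA ((k : ℕ) + 1) := by
      exact (sub_sub_cancel _ _).symm
    rw [hEq]
    refine (range_sub_le _ _).trans (sup_le ?_ ?_)
    · exact (range_mul_le_left _ _).trans
        (le_iSup_of_le (⟨(k : ℕ), by omega⟩ : Fin (j+2)) le_rfl)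
    · exact le_iSup_of_le (⟨(k : ℕ) + 1, by omega⟩ : Fin (j+2)) le_rfl

/-- The range of `[√B_H, B_A √B_H, …, B_A^m √B_H]` equals the range of the
iterated commutators `[C₀, C₁, …, C_m]`. -/
theorem kalman_range_BA_eq_range_commutators {n : ℕ} (B : Matrix (Fin n) (Fin n) ℂ)
    (hBH : ((1/2 : ℂ) • (B + Bᴴ)).PosSemidef) (m : ℕ) :
    (⨆ j : Fin (m+1),
        LinearMap.range ((((1/2 : ℂ) • (B - Bᴴ)) ^ (j : ℕ) * hBH.sqrt).mulVecLin))
      = ⨆ j : Fin (m+1),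
        LinearMap.range ((commSeq hBH.sqrt ((1/2 : ℂ) • (B - Bᴴ)) (j : ℕ)).mulVecLin) := by
  set S := hBH.sqrt
  set BA := (1/2 : ℂ) • (B - Bᴴ)
  refine le_antisymm (iSup_le fun j => ?_) (iSup_le fun j => ?_)
  · exact (aux_pow_le S BA (j : ℕ)).trans (iSup_fin_le (f := fun k => LinearMap.range ((commSeq S BA k).mulVecLin)) j.is_le)
  · exact (aux_comm_le S BA (j : ℕ)).trans (iSup_fin_le (f := fun k => LinearMap.range ((BA ^ k * S).mulVecLin)) j.is_le)
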